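/- For every integer k ≥ 3 there exists a k-DSMI-CYC instance of dimension n = 5 that admits no weakly stable matching. -/

import Mathlib

set_option maxRecDepth 40000
set_option synthInstance.maxHeartbeats 1000000
set_option synthInstance.maxSize 2000
set_option linter.unusedSectionVars false
set_option linter.unusedVariables false



/-- A `k`-DSMI-CYC instance of dimension `n`: a directed graph on a vertex set `V`
partitioned into `k` genders (indexed by `ZMod k`), each of size `n`, where every edge
goes from gender `g` to gender `g + 1`, together with a rank function such that for
every vertex of out-degree `d` the ranks of its outgoing edges are exactly `1, …, d`. -/
structure KDSMI (k : ℕ) (V : Type) [Fintype V] [DecidableEq V] (n : ℕ) where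
  E : V → V → Bool
  r : V → V → ℕ
  gender : V → ZMod k
  gender_card : ∀ g : ZMod k, (Finset.univ.filter fun v => gender v = g).card = n
  edge_gender : ∀ v w : V, E v w → gender w = gender v + 1
  rank_bij : ∀ v : V,
    (Finset.univ.filter fun w => E v w).image (r v)
      = Finset.Icc 1 (Finset.univ.filter fun w => E v w).card

namespace KDSMI

variable {k : ℕ} {V : Type} [Fintype V] [DecidableEq V] {n : ℕ}

/-- A family: a directed `k`-cycle containing exactly one vertex of each gender,
recorded as a function `f` sending each gender `i` to the family member `f i` of that
gender, with edges `f i → f (i + 1)`. -/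
def IsFamily (G : KDSMI k V n) (f : ZMod k → V) : Prop :=
  (∀ i : ZMod k, G.gender (f i) = i) ∧ ∀ i : ZMod k, G.E (f i) (f (i + 1))

/-- A matching: a set of pairwise vertex-disjoint families. -/
def IsMatching (G : KDSMI k V n) (F : Finset (ZMod k → V)) : Prop :=
  (∀ f ∈ F, G.IsFamily f) ∧
  ∀ f ∈ F, ∀ g ∈ F, f ≠ g → ∀ i j : ZMod k, f i ≠ g j

/-- `w` is the vertex that the edge leaving `v` inside its family of `F` points to. -/
def MatchedTo (F : Finset (ZMod k → V)) (v w : V) : Prop :=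
  ∃ f ∈ F, ∃ i : ZMod k, f i = v ∧ f (i + 1) = w

/-- `r(v,w) < R_F(v)` (vacuously true if `v` lies in no family of `F`, its rank then
being `+∞`). -/
def Prefers (G : KDSMI k V n) (F : Finset (ZMod k → V)) (v w : V) : Prop :=
  ∀ u : V, MatchedTo F v u → G.r v w < G.r v u

/-- The directed `k`-cycle `f` (one vertex per gender) blocks the matching `F`. -/
def Blocks (G : KDSMI k V n) (F : Finset (ZMod k → V)) (f : ZMod k → V) : Prop :=
  G.IsFamily f ∧ ∀ i : ZMod k, G.Prefers F (f i) (f (i + 1))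

/-- A matching is weakly stable if no directed `k`-cycle with one vertex per gender
blocks it. -/
def WeaklyStable (G : KDSMI k V n) (F : Finset (ZMod k → V)) : Prop :=
  ∀ f : ZMod k → V, ¬ G.Blocks F f

end KDSMI

namespace S19
open Finset

abbrev Ix := Fin 5

def P0 : Ix → List Ix := ![[0,4,3], [4,3,1], [0], [], []]
def P1 : Ix → List Ix := ![[0,4], [1,0,4], [2,4], [2,3], []]
def Q : Ix → List Ix := ![[1,4,2], [0,3,2], [0,3,2], [2,1,4], [0,3]]
def passL : Ix → List Ix := ![[3,0], [4,1], [2], [0,3], [1,4]]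
def pairL : Ix → List Ix := ![[0,3], [1,4], [2], [], []]
def cls : Ix → Ix := ![0, 1, 2, 0, 1]

def eIdx (g : ℕ) (i j : Ix) : Bool :=
  if g = 0 then j ∈ P0 i else if g = 1 then j ∈ P1 i
  else if g = 2 then j ∈ Q i else j ∈ passL i

def rIdx (g : ℕ) (i j : Ix) : ℕ :=
  if g = 0 then (P0 i).idxOf j + 1 else if g = 1 then (P1 i).idxOf j + 1
  else if g = 2 then (Q i).idxOf j + 1 else (passL i).idxOf j + 1

def T : Finset (Ix × Ix × Ix) := {(0,0,4), (0,3,2), (1,3,3), (1,1,0), (2,0,0)}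
def tl : Fin 5 → Ix × Ix × Ix := ![(0,0,4), (0,3,2), (1,3,3), (1,1,0), (2,0,0)]

lemma hT_mem : ∀ a b c y : Ix, b ∈ P0 a → c ∈ P1 b → y ∈ Q c → y ∈ pairL a →
    (a,b,c) ∈ T := by decide
lemma hT_P : ∀ t ∈ T, t.2.1 ∈ P0 t.1 ∧ t.2.2 ∈ P1 t.2.1 ∧
    ∀ x ∈ pairL t.1, x ∈ Q t.2.2 := by decide
lemma hT_a : ∀ t ∈ T, t.1 = 0 ∨ t.1 = 1 ∨ t.1 = 2 := by decide
lemma hcls1 : ∀ x j : Ix, j ∈ passL x → cls j = cls x := by decide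
lemma hcls2 : ∀ x j : Ix, cls x = cls j → j ∈ passL x := by decide
lemma hP0src : ∀ a b : Ix, b ∈ P0 a → a = 0 ∨ a = 1 ∨ a = 2 := by decide
lemma hpair : ∀ a x : Ix, (a = 0 ∨ a = 1 ∨ a = 2) → (x ∈ pairL a ↔ cls x = a) := by decide
lemma hpself : ∀ a : Ix, (a = 0 ∨ a = 1 ∨ a = 2) → a ∈ pairL a := by decide
lemma h2pair : ∀ a : Ix, (2:Ix) ∈ pairL a → a = 2 := by decide
lemma hpairdis : ∀ a1 a2 x : Ix, x ∈ pairL a1 → x ∈ pairL a2 → a1 = a2 := by decide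
lemma hpair_two : ∀ a : Ix, (a = 0 ∨ a = 1) → ∃ x y : Ix, x ≠ y ∧ x ∈ pairL a ∧ y ∈ pairL a := by
  decide
lemma htl : ∀ u ∈ T, ∃ i : Fin 5, tl i = u := by decide
lemma tl_inj : ∀ i j : Fin 5, tl i = tl j → i = j := by decide

lemma eIdx0 (i j : Ix) : eIdx 0 i j = decide (j ∈ P0 i) := rfl
lemma eIdx1 (i j : Ix) : eIdx 1 i j = decide (j ∈ P1 i) := rfl
lemma eIdx2 (i j : Ix) : eIdx 2 i j = decide (j ∈ Q i) := rfl

lemma key : ∀ (g : ℕ) (i : Ix),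
    ((Finset.univ.filter fun j => eIdx g i j).image (rIdx g i))
      = Finset.Icc 1 (Finset.univ.filter fun j => eIdx g i j).card := by
  intro g i
  match g with
  | 0 => revert i; decide
  | 1 => revert i; decide
  | 2 => revert i; decide
  | (n+3) =>
    have h : ∀ i : Ix, ((Finset.univ.filter fun j => decide (j ∈ passL i)).image
        (fun j => (passL i).idxOf j + 1))
        = Finset.Icc 1 (Finset.univ.filter fun j => decide (j ∈ passL i)).card := by decide
    have hr : rIdx (n+3) i = fun j => (passL i).idxOf j + 1 := by
      funext j
      simp only [rIdx, if_neg (by omega : ¬ (n+3 = 0)),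
        if_neg (by omega : ¬ (n+3 = 1)), if_neg (by omega : ¬ (n+3 = 2))]
    simpa only [eIdx, rIdx, hr, if_neg (by omega : ¬ (n+3 = 0)),
      if_neg (by omega : ¬ (n+3 = 1)), if_neg (by omega : ¬ (n+3 = 2))] using h i

lemma gadget : ∀ b : Fin 5 → Bool,
    (∀ i j : Fin 5, b i = true → b j = true → i ≠ j →
      (tl i).1 ≠ (tl j).1 ∧ (tl i).2.1 ≠ (tl j).2.1 ∧ (tl i).2.2 ≠ (tl j).2.2) →
    ∃ t ∈ T,
      (∀ i : Fin 5, b i = true → (tl i).1 = t.1 →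
        (t.1 ≠ 2 ∧ rIdx 0 t.1 t.2.1 < rIdx 0 (tl i).1 (tl i).2.1)) ∧
      (∀ i : Fin 5, b i = true → (tl i).2.1 = t.2.1 →
        rIdx 1 t.2.1 t.2.2 < rIdx 1 (tl i).2.1 (tl i).2.2) ∧
      (∀ i : Fin 5, b i = true → (tl i).2.2 = t.2.2 → ∀ x ∈ pairL t.1, ∀ y ∈ pairL (tl i).1,
        rIdx 2 t.2.2 x < rIdx 2 (tl i).2.2 y) := by decide

section Inst
variable {k : ℕ} [NeZero k]

def vert (g : ZMod k) (j : Ix) : Fin (5 * k) :=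
  finProdFinEquiv (j, ⟨g.val, ZMod.val_lt g⟩)

def idx (v : Fin (5 * k)) : Ix := (finProdFinEquiv.symm v).1
def gf (v : Fin (5 * k)) : Fin k := (finProdFinEquiv.symm v).2
def gen (v : Fin (5 * k)) : ZMod k := ((gf v : ℕ) : ZMod k)

@[simp] lemma idx_vert (g : ZMod k) (j : Ix) : idx (vert g j) = j := by
  simp [idx, vert]

@[simp] lemma gf_vert (g : ZMod k) (j : Ix) : gf (vert g j) = ⟨g.val, ZMod.val_lt g⟩ := by
  simp [gf, vert]

@[simp] lemma gen_vert (g : ZMod k) (j : Ix) : gen (vert g j) = g := by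
  simp [gen, gf_vert]

lemma gen_val (v : Fin (5 * k)) : (gen v).val = (gf v : ℕ) := by
  simp [gen, ZMod.val_natCast, Nat.mod_eq_of_lt (gf v).isLt]

lemma vert_gen_idx (v : Fin (5 * k)) : vert (gen v) (idx v) = v := by
  have h : (⟨(gen v).val, ZMod.val_lt _⟩ : Fin k) = gf v := by
    apply Fin.ext; simp [gen_val]
  simp only [vert, h]
  exact finProdFinEquiv.apply_symm_apply v

lemma vert_inj {g g' : ZMod k} {j j' : Ix} (h : vert g j = vert g' j') :
    g = g' ∧ j = j' := by
  constructor
  · have := congrArg gen h; simpa using this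
  · have := congrArg idx h; simpa using this

lemma cast_val_eq {i : ZMod k} : ((i.val : ℕ) : ZMod k) = i :=
  ZMod.natCast_rightInverse i

def Gk (hk : 3 ≤ k) : KDSMI k (Fin (5 * k)) 5 where
  E v w := eIdx (gf v : ℕ) (idx v) (idx w) && decide (gen w = gen v + 1)
  r v w := rIdx (gf v : ℕ) (idx v) (idx w)
  gender := gen
  gender_card := by
    intro g
    have h5 : (Finset.univ : Finset Ix).card = 5 := by simp
    refine Eq.trans ?_ h5
    apply Finset.card_bij' (fun v _ => idx v) (fun j _ => vert g j)
    · intros; simp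
    · intros; simp
    · intro v hv
      simp only [Finset.mem_filter] at hv
      rw [← hv.2, vert_gen_idx]
    · intro j _
      simp
  edge_gender := by
    intro v w h
    simp only [Bool.and_eq_true, decide_eq_true_eq] at h
    exact h.2
  rank_bij := by
    intro v
    have hfil : (Finset.univ.filter fun w => (eIdx (gf v : ℕ) (idx v) (idx w)
          && decide (gen w = gen v + 1)) = true)
        = (Finset.univ.filter fun j => eIdx (gf v : ℕ) (idx v) j = true).image
            (vert (gen v + 1)) := by
      ext w
      simp only [Finset.mem_filter, Finset.mem_image, Finset.mem_univ, true_and,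
        Bool.and_eq_true, decide_eq_true_eq]
      constructor
      · rintro ⟨h1, h2⟩
        exact ⟨idx w, h1, by rw [← h2, vert_gen_idx]⟩
      · rintro ⟨j, hj, rfl⟩
        simp [hj]
    rw [hfil, Finset.image_image,
      Finset.card_image_of_injective _ (fun a b hab => (vert_inj hab).2)]
    have : ((fun w => rIdx (gf v : ℕ) (idx v) (idx w)) ∘ vert (gen v + 1))
        = rIdx (gf v : ℕ) (idx v) := by
      funext j; simp [Function.comp]
    rw [this]
    exact key _ _

end Inst

section Main
variable {k : ℕ} [NeZero k] (hk : 3 ≤ k)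
variable (F : Finset (ZMod k → Fin (5 * k)))

lemma main (hM : (Gk hk).IsMatching F) : ¬ (Gk hk).WeaklyStable F := by
  intro hS
  have hgen : ∀ f ∈ F, ∀ i : ZMod k, gen (f i) = i := fun f hf => (hM.1 f hf).1
  have hvert : ∀ f ∈ F, ∀ i : ZMod k, f i = vert i (idx (f i)) := by
    intro f hf i
    conv_lhs => rw [← vert_gen_idx (f i)]
    rw [hgen f hf i]
  have famE : ∀ f ∈ F, ∀ i : ZMod k, eIdx i.val (idx (f i)) (idx (f (i+1))) = true := by
    intro f hf i
    have hE := (hM.1 f hf).2 i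
    simp only [Gk, Bool.and_eq_true, decide_eq_true_eq] at hE
    have hg : (gf (f i) : ℕ) = i.val := by
      rw [← gen_val, hgen f hf i]
    rw [hg] at hE
    exact hE.1
  have h3cast : ((3:ℕ) : ZMod k) = (2:ZMod k)+1 := by push_cast; ring
  have hcast2 : ((2:ℕ) : ZMod k) = (2:ZMod k) := by push_cast; ring
  have hval1 : (1 : ZMod k).val = 1 := by
    rw [← Nat.cast_one, ZMod.val_cast_of_lt (by omega)]
  have hval2 : (2 : ZMod k).val = 2 := by
    rw [← hcast2, ZMod.val_cast_of_lt (by omega)]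
  have chain : ∀ f ∈ F, ∀ m : ℕ, 3 ≤ m → m ≤ k →
      cls (idx (f ((m:ℕ) : ZMod k))) = cls (idx (f ((2:ZMod k)+1))) := by
    intro f hf m hm3 hmk
    induction m, hm3 using Nat.le_induction with
    | base => rw [h3cast]
    | succ m hm3 ih =>
      have hmk' : m < k := by omega
      have hval : ((m:ℕ) : ZMod k).val = m := ZMod.val_cast_of_lt hmk'
      have hE := famE f hf ((m:ℕ) : ZMod k)
      rw [hval] at hE
      simp only [eIdx, if_neg (by omega : ¬ (m = 0)), if_neg (by omega : ¬ (m = 1)),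
        if_neg (by omega : ¬ (m = 2)), decide_eq_true_eq] at hE
      have hsucc : ((m:ℕ) : ZMod k) + 1 = (((m+1:ℕ)) : ZMod k) := by push_cast; ring
      rw [hsucc] at hE
      rw [← ih (by omega), hcls1 _ _ hE]
  have land : ∀ f ∈ F, cls (idx (f 0)) = cls (idx (f ((2:ZMod k)+1))) := by
    intro f hf
    have := chain f hf k (by omega) le_rfl
    rwa [ZMod.natCast_self] at this
  have hb_mem : ∀ f ∈ F, idx (f 1) ∈ P0 (idx (f 0)) := by
    intro f hf
    have hE := famE f hf 0
    rwa [ZMod.val_zero, zero_add, eIdx0, decide_eq_true_eq] at hE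
  have hc_mem : ∀ f ∈ F, idx (f 2) ∈ P1 (idx (f 1)) := by
    intro f hf
    have hE := famE f hf 1
    rwa [hval1, one_add_one_eq_two, eIdx1, decide_eq_true_eq] at hE
  have hy_mem : ∀ f ∈ F, idx (f ((2:ZMod k)+1)) ∈ Q (idx (f 2)) := by
    intro f hf
    have hE := famE f hf 2
    rwa [hval2, eIdx2, decide_eq_true_eq] at hE
  have ha012 : ∀ f ∈ F, idx (f 0) = 0 ∨ idx (f 0) = 1 ∨ idx (f 0) = 2 := by
    intro f hf
    exact hP0src _ _ (hb_mem f hf)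
  have hclsid : ∀ z : Ix, (z = 0 ∨ z = 1 ∨ z = 2) → cls z = z := by decide
  have hy_pair : ∀ f ∈ F, idx (f ((2:ZMod k)+1)) ∈ pairL (idx (f 0)) := by
    intro f hf
    rw [hpair _ _ (ha012 f hf), ← land f hf]
    exact hclsid _ (ha012 f hf)
  have hT_fam : ∀ f ∈ F, (idx (f 0), idx (f 1), idx (f 2)) ∈ T := by
    intro f hf
    exact hT_mem _ _ _ _ (hb_mem f hf) (hc_mem f hf) (hy_mem f hf) (hy_pair f hf)
  have pass_idx : ∀ f ∈ F, ∀ i : ZMod k, 3 ≤ i.val → idx (f i) ∈ pairL (idx (f 0)) := by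
    intro f hf i h3
    rw [hpair _ _ (ha012 f hf)]
    have hi : ((i.val : ℕ) : ZMod k) = i := cast_val_eq
    have hch := chain f hf i.val h3 (le_of_lt (ZMod.val_lt i))
    rw [hi] at hch
    rw [hch, ← land f hf]
    exact hclsid _ (ha012 f hf)
  have uniq : ∀ f1 ∈ F, ∀ f2 ∈ F, idx (f1 0) = idx (f2 0) → f1 = f2 := by
    intro f1 h1 f2 h2 hidx
    by_contra hne
    exact hM.2 f1 h1 f2 h2 hne 0 0 (by rw [hvert f1 h1 0, hvert f2 h2 0, hidx])
  have uniq1 : ∀ f1 ∈ F, ∀ f2 ∈ F, idx (f1 1) = idx (f2 1) → f1 = f2 := by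
    intro f1 h1 f2 h2 hidx
    by_contra hne
    exact hM.2 f1 h1 f2 h2 hne 1 1 (by rw [hvert f1 h1 1, hvert f2 h2 1, hidx])
  have uniq2 : ∀ f1 ∈ F, ∀ f2 ∈ F, idx (f1 2) = idx (f2 2) → f1 = f2 := by
    intro f1 h1 f2 h2 hidx
    by_contra hne
    exact hM.2 f1 h1 f2 h2 hne 2 2 (by rw [hvert f1 h1 2, hvert f2 h2 2, hidx])
  set bb : Fin 5 → Bool :=
    fun i => decide (∃ f ∈ F, (idx (f 0), idx (f 1), idx (f 2)) = tl i) with hbb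
  have hbbt : ∀ i : Fin 5, bb i = true ↔ ∃ f ∈ F, (idx (f 0), idx (f 1), idx (f 2)) = tl i := by
    intro i; rw [hbb]; simp
  obtain ⟨t, htT, cond1, cond2, cond3⟩ := gadget bb (by
    intro i j hi hj hij
    obtain ⟨f1, hf1, he1⟩ := (hbbt i).1 hi
    obtain ⟨f2, hf2, he2⟩ := (hbbt j).1 hj
    have hne : f1 ≠ f2 := by
      rintro rfl
      exact hij (tl_inj i j (by rw [← he1, ← he2]))
    rw [← he1, ← he2]
    refine ⟨?_, ?_, ?_⟩
    · intro h; exact hne (uniq f1 hf1 f2 hf2 h)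
    · intro h; exact hne (uniq1 f1 hf1 f2 hf2 h)
    · intro h; exact hne (uniq2 f1 hf1 f2 hf2 h))
  have getI : ∀ f ∈ F, ∃ i : Fin 5, bb i = true ∧ tl i = (idx (f 0), idx (f 1), idx (f 2)) := by
    intro f hf
    obtain ⟨i, hi⟩ := htl _ (hT_fam f hf)
    exact ⟨i, (hbbt i).2 ⟨f, hf, hi.symm⟩, hi⟩
  have C1 : ∀ f ∈ F, idx (f 0) = t.1 →
      t.1 ≠ 2 ∧ rIdx 0 t.1 t.2.1 < rIdx 0 (idx (f 0)) (idx (f 1)) := by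
    intro f hf h
    obtain ⟨i, hbi, hti⟩ := getI f hf
    have := cond1 i hbi (by rw [hti]; exact h)
    rwa [hti] at this
  have C2 : ∀ f ∈ F, idx (f 1) = t.2.1 →
      rIdx 1 t.2.1 t.2.2 < rIdx 1 (idx (f 1)) (idx (f 2)) := by
    intro f hf h
    obtain ⟨i, hbi, hti⟩ := getI f hf
    have := cond2 i hbi (by rw [hti]; exact h)
    rwa [hti] at this
  have C3 : ∀ f ∈ F, idx (f 2) = t.2.2 → ∀ x ∈ pairL t.1, ∀ y ∈ pairL (idx (f 0)),
      rIdx 2 t.2.2 x < rIdx 2 (idx (f 2)) y := by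
    intro f hf h
    obtain ⟨i, hbi, hti⟩ := getI f hf
    have := cond3 i hbi (by rw [hti]; exact h)
    rwa [hti] at this
  obtain ⟨a, b, c⟩ := t
  simp only at C1 C2 C3
  have ha012' : a = 0 ∨ a = 1 ∨ a = 2 := hT_a _ htT
  obtain ⟨hbP, hcP, hQc⟩ := hT_P _ htT
  simp only at hbP hcP hQc
  have hfree : ∀ i : ZMod k, 3 ≤ i.val →
      ∃ x, x ∈ pairL a ∧ ∀ f ∈ F, f i ≠ vert i x := by
    intro i h3
    by_contra hcon
    push_neg at hcon
    have htwo : (a = 0 ∨ a = 1) → False := by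
      intro ha01
      obtain ⟨x, y, hxy, hx, hy⟩ := hpair_two a ha01
      obtain ⟨f1, hf1, he1⟩ := hcon x hx
      obtain ⟨f2, hf2, he2⟩ := hcon y hy
      have hi1 : idx (f1 i) = x := by rw [he1, idx_vert]
      have hi2 : idx (f2 i) = y := by rw [he2, idx_vert]
      have hp1 : x ∈ pairL (idx (f1 0)) := by rw [← hi1]; exact pass_idx f1 hf1 i h3
      have hp2 : y ∈ pairL (idx (f2 0)) := by rw [← hi2]; exact pass_idx f2 hf2 i h3
      have e1 : idx (f1 0) = a := hpairdis _ _ _ hp1 hx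
      have e2 : idx (f2 0) = a := hpairdis _ _ _ hp2 hy
      have hfe : f1 = f2 := uniq f1 hf1 f2 hf2 (by rw [e1, e2])
      rw [hfe, he2] at he1
      exact hxy ((vert_inj he1.symm).2)
    rcases ha012' with ha | ha | ha
    · exact htwo (Or.inl ha)
    · exact htwo (Or.inr ha)
    · obtain ⟨f1, hf1, he1⟩ := hcon 2 (by rw [ha]; decide)
      have hi1 : idx (f1 i) = 2 := by rw [he1, idx_vert]
      have hp1 : (2:Ix) ∈ pairL (idx (f1 0)) := by rw [← hi1]; exact pass_idx f1 hf1 i h3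
      have e1 : idx (f1 0) = 2 := h2pair _ hp1
      exact (C1 f1 hf1 (by rw [e1, ha])).1 ha
  classical
  set X : ZMod k → Ix := fun i =>
    if h : ∃ x, x ∈ pairL a ∧ ∀ f ∈ F, f i ≠ vert i x then h.choose else a with hX
  have hXspec : ∀ i : ZMod k, 3 ≤ i.val →
      X i ∈ pairL a ∧ ∀ f ∈ F, f i ≠ vert i (X i) := by
    intro i h3
    have h := hfree i h3
    rw [hX]
    simp only [dif_pos h]
    exact h.choose_spec
  set D : ZMod k → Ix := fun i =>
    if i.val = 0 then a else if i.val = 1 then b else if i.val = 2 then c else X i with hD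
  have hD0 : ∀ i : ZMod k, i.val = 0 → D i = a := by
    intro i h; rw [hD]; simp [h]
  have hD1 : D 1 = b := by rw [hD]; simp [hval1]
  have hD2 : D 2 = c := by rw [hD]; simp [hval2]
  have hD3 : ∀ i : ZMod k, 3 ≤ i.val → D i = X i := by
    intro i h; rw [hD]
    simp only [if_neg (by omega : ¬ (i.val = 0)), if_neg (by omega : ¬ (i.val = 1)),
      if_neg (by omega : ¬ (i.val = 2))]
  have hDpair : ∀ i : ZMod k, i.val ≠ 1 → i.val ≠ 2 → D i ∈ pairL a := by
    intro i h1 h2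
    rcases Nat.eq_zero_or_pos i.val with h0 | h0
    · rw [hD0 i h0]; exact hpself a ha012'
    · have h3 : 3 ≤ i.val := by omega
      rw [hD3 i h3]; exact (hXspec i h3).1
  set fb : ZMod k → Fin (5 * k) := fun i => vert i (D i) with hfb
  have hidxfb : ∀ i : ZMod k, idx (fb i) = D i := by
    intro i; rw [hfb]; exact idx_vert i (D i)
  have hval_add : ∀ i : ZMod k, (i + 1).val = (i.val + 1) % k := by
    intro i
    conv_lhs => rw [← cast_val_eq (i := i)]
    rw [show ((i.val : ℕ) : ZMod k) + 1 = ((i.val + 1 : ℕ) : ZMod k) by push_cast; ring]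
    exact ZMod.val_natCast _ _
  have hgfb : ∀ (i : ZMod k) (x : Ix), (gf (vert i x) : ℕ) = i.val := by
    intro i x; rw [gf_vert]
  have hsuc_ne : ∀ i : ZMod k, 2 ≤ i.val → (i+1).val ≠ 1 ∧ (i+1).val ≠ 2 := by
    intro i h2
    have hik : i.val < k := ZMod.val_lt i
    rw [hval_add]
    rcases Nat.lt_or_ge (i.val + 1) k with hlt | hge
    · rw [Nat.mod_eq_of_lt hlt]; omega
    · have he : i.val + 1 = k := by omega
      rw [he, Nat.mod_self]; omega
  have htar : ∀ i : ZMod k, 2 ≤ i.val → D (i + 1) ∈ pairL a := by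
    intro i h2
    exact hDpair _ (hsuc_ne i h2).1 (hsuc_ne i h2).2
  have hfam : (Gk hk).IsFamily fb := by
    constructor
    · intro i; rw [hfb]; exact gen_vert i (D i)
    · intro i
      show (eIdx (gf (fb i) : ℕ) (idx (fb i)) (idx (fb (i+1)))
        && decide (gen (fb (i+1)) = gen (fb i) + 1)) = true
      rw [Bool.and_eq_true]
      constructor
      · rw [hfb]
        simp only [idx_vert, hgfb]
        have hcases : i.val = 0 ∨ i.val = 1 ∨ i.val = 2 ∨ 3 ≤ i.val := by omega
        rcases hcases with h | h | h | h
        · have hi0 : i = 0 := by rwa [ZMod.val_eq_zero] at h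
          subst hi0
          rw [h, hD0 0 h, zero_add, hD1, eIdx0, decide_eq_true_eq]
          exact hbP
        · have hi1 : i = 1 := by rw [← cast_val_eq (i := i), h, Nat.cast_one]
          subst hi1
          rw [h, hD1, one_add_one_eq_two, hD2, eIdx1, decide_eq_true_eq]
          exact hcP
        · have hi2 : i = 2 := by rw [← cast_val_eq (i := i), h, hcast2]
          subst hi2
          rw [h, hD2, eIdx2, decide_eq_true_eq]
          exact hQc _ (htar 2 (by rw [hval2]))
        · rw [hD3 i h]
          simp only [eIdx, if_neg (by omega : ¬ (i.val = 0)), if_neg (by omega : ¬ (i.val = 1)),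
            if_neg (by omega : ¬ (i.val = 2)), decide_eq_true_eq]
          apply hcls2
          have h1 : cls (X i) = a := (hpair a (X i) ha012').1 (hXspec i h).1
          have h2 : cls (D (i+1)) = a := (hpair a (D (i+1)) ha012').1 (htar i (by omega))
          rw [h1, h2]
      · rw [hfb]
        simp only [gen_vert, decide_eq_true_eq]
  have hmatch : ∀ (i : ZMod k) (u : Fin (5 * k)), KDSMI.MatchedTo F (fb i) u →
      ∃ f ∈ F, f i = fb i ∧ f (i + 1) = u := by
    rintro i u ⟨f, hf, j, hj1, hj2⟩
    have hji : j = i := by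
      have hg := hgen f hf j
      rw [hj1] at hg
      rw [hfb, gen_vert] at hg
      exact hg.symm
    rw [hji] at hj1 hj2
    exact ⟨f, hf, hj1, hj2⟩
  have hrfb : ∀ (i : ZMod k) (w : Fin (5 * k)),
      (Gk hk).r (fb i) w = rIdx i.val (D i) (idx w) := by
    intro i w
    show rIdx (gf (fb i) : ℕ) (idx (fb i)) (idx w) = _
    rw [hfb]
    simp only [idx_vert, hgfb]
  have hpref : ∀ i : ZMod k, (Gk hk).Prefers F (fb i) (fb (i+1)) := by
    intro i u hu
    obtain ⟨f, hf, he1, he2⟩ := hmatch i u hu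
    have hidxf : idx (f i) = D i := by rw [he1, hidxfb]
    rw [hrfb, hrfb]
    have hcases : i.val = 0 ∨ i.val = 1 ∨ i.val = 2 ∨ 3 ≤ i.val := by omega
    rcases hcases with h | h | h | h
    · have hi0 : i = 0 := by rwa [ZMod.val_eq_zero] at h
      subst hi0
      have hfa : idx (f 0) = a := by rw [hidxf, hD0 0 h]
      rw [h, hD0 0 h]
      rw [zero_add] at he2 ⊢
      rw [← he2, hidxfb, hD1]
      have := (C1 f hf hfa).2
      rwa [hfa] at this
    · have hi1 : i = 1 := by rw [← cast_val_eq (i := i), h, Nat.cast_one]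
      subst hi1
      have hfbv : idx (f 1) = b := by rw [hidxf, hD1]
      rw [h, hD1]
      rw [one_add_one_eq_two] at he2 ⊢
      rw [← he2, hidxfb, hD2]
      have := C2 f hf (by rw [hfbv])
      rwa [hfbv] at this
    · have hi2 : i = 2 := by rw [← cast_val_eq (i := i), h, hcast2]
      subst hi2
      have hfc : idx (f 2) = c := by rw [hidxf, hD2]
      rw [h, hD2]
      rw [← he2, hidxfb]
      have hy : idx (f ((2:ZMod k)+1)) ∈ pairL (idx (f 0)) := hy_pair f hf
      have := C3 f hf (by rw [hfc]) (D ((2:ZMod k)+1)) (htar 2 (by rw [hval2]))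
        (idx (f ((2:ZMod k)+1))) hy
      rwa [hfc] at this
    · exfalso
      exact (hXspec i h).2 f hf (by rw [he1]; show vert i (D i) = vert i (X i); rw [hD3 i h])
  exact hS fb ⟨hfam, hpref⟩

end Main
end S19


/-- For every `k ≥ 3` there is a `k`-DSMI-CYC instance of dimension 5 that admits no
weakly stable matching. -/
theorem stmt_19 :
    ∀ k : ℕ, 3 ≤ k → ∃ G : KDSMI k (Fin (5 * k)) 5,
      ¬ ∃ F : Finset (ZMod k → Fin (5 * k)), G.IsMatching F ∧ G.WeaklyStable F := by
  intro k hk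
  haveI : NeZero k := ⟨by omega⟩
  refine ⟨S19.Gk hk, ?_⟩
  rintro ⟨F, hM, hS⟩
  exact S19.main hk F hM hS
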